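/- Let T_ℓ denote the degree-ℓ Chebyshev polynomial of the first kind. Then for every real x > 1, T_ℓ(x) ≥ (1/2)·exp(2ℓ·√((x−1)/(x+1))). -/

import Mathlib

open Polynomial

/-- `exp (2s) * (1 - s) ≤ 1 + s` for `0 ≤ s`. -/
lemma exp_two_mul_le_aux {s : ℝ} (hs : 0 ≤ s) :
    Real.exp (2 * s) * (1 - s) ≤ 1 + s := by
  set f : ℝ → ℝ := fun t => 1 + t - (1 - t) * Real.exp (2 * t) with hf
  have hderiv : ∀ t : ℝ, HasDerivAt f (1 - (1 - 2 * t) * Real.exp (2 * t)) t := by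
    intro t
    have h1 : HasDerivAt (fun t : ℝ => Real.exp (2 * t)) (Real.exp (2 * t) * 2) t := by
      have h := (Real.hasDerivAt_exp (2 * t)).comp t
        ((hasDerivAt_id t).const_mul (2 : ℝ))
      simp at h
      exact h
    have h2 := ((hasDerivAt_const t (1:ℝ)).sub (hasDerivAt_id t)).mul h1
    have h3 : HasDerivAt (fun t : ℝ => 1 + t) 1 t := by
      have h := (hasDerivAt_const t (1:ℝ)).add (hasDerivAt_id t)
      simp at h
      exact h
    have this : HasDerivAt f _ t := h3.sub h2
    convert this using 1
    simp only [Pi.sub_apply, id_eq]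
    ring
  have hmono : MonotoneOn f (Set.Ici (0 : ℝ)) := by
    apply monotoneOn_of_deriv_nonneg (convex_Ici 0)
    · exact (Continuous.sub (by continuity) (by continuity)).continuousOn
    · intro t _
      exact (hderiv t).differentiableAt.differentiableWithinAt
    · intro t _
      rw [(hderiv t).deriv]
      have h4 : 1 - 2 * t ≤ Real.exp (-(2 * t)) := by
        have := Real.add_one_le_exp (-(2 * t)); linarith
      have h5 := Real.exp_pos (2 * t)
      have h6 : Real.exp (-(2 * t)) * Real.exp (2 * t) = 1 := by
        rw [← Real.exp_add]; simp
      nlinarith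
  have h0 : f 0 = 0 := by simp [hf]
  have := hmono (Set.self_mem_Ici) (Set.mem_Ici.mpr hs) hs
  rw [h0] at this
  simp only [hf] at this
  linarith

/-- Chebyshev `T` at `cosh`. -/
lemma T_real_cosh (n : ℤ) (t : ℝ) :
    (Polynomial.Chebyshev.T ℝ n).eval (Real.cosh t) = Real.cosh (n * t) := by
  have key := Polynomial.Chebyshev.complex_ofReal_eval_T (Real.cosh t) n
  have h1 : ((Real.cosh t : ℝ) : ℂ) = Complex.cos (t * Complex.I) := by
    rw [Complex.cos_mul_I, Complex.ofReal_cosh]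
  rw [h1, Polynomial.Chebyshev.T_complex_cos (t * Complex.I) n] at key
  have h2 : Complex.cos ((n : ℂ) * (t * Complex.I)) = ((Real.cosh (n * t) : ℝ) : ℂ) := by
    rw [show (n : ℂ) * (t * Complex.I) = ((n : ℝ) * t : ℝ) * Complex.I by push_cast; ring,
      Complex.cos_mul_I, Complex.ofReal_cosh]
  rw [h2] at key
  exact_mod_cast key

/-- Growth bound for Chebyshev polynomials of the first kind:
`T_ℓ(x) ≥ (1/2)·exp(2ℓ√((x-1)/(x+1)))` for `x > 1`. -/
theorem chebyshev_growth (ℓ : ℕ) (x : ℝ) (hx : 1 < x) :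
    (1 / 2 : ℝ) * Real.exp (2 * ℓ * Real.sqrt ((x - 1) / (x + 1)))
      ≤ (Polynomial.Chebyshev.T ℝ ℓ).eval x := by
  set s := Real.sqrt ((x - 1) / (x + 1)) with hs_def
  have hx1 : (0:ℝ) < x + 1 := by linarith
  have hfrac : 0 ≤ (x - 1) / (x + 1) := div_nonneg (by linarith) (by linarith)
  have hs0 : 0 ≤ s := Real.sqrt_nonneg _
  have hs2 : s ^ 2 = (x - 1) / (x + 1) := Real.sq_sqrt hfrac
  have hs2' : s ^ 2 * (x + 1) = x - 1 := by
    rw [hs2]; field_simp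
  have hs1 : s < 1 := by
    nlinarith [sq_nonneg (s - 1), sq_nonneg s]
  set y := x + s * (x + 1) with hy_def
  have hy1 : 1 < y := by nlinarith
  have hy0 : 0 < y := by linarith
  -- inverse of y
  have hyinv : y⁻¹ = x - s * (x + 1) :=
    inv_eq_of_mul_eq_one_right (by nlinarith)
  -- cosh (log y) = x
  have hcosh : Real.cosh (Real.log y) = x := by
    rw [Real.cosh_log hy0, hyinv]; ring
  -- evaluate T
  have hT : (Polynomial.Chebyshev.T ℝ ℓ).eval x = Real.cosh (ℓ * Real.log y) := by
    rw [← hcosh, T_real_cosh (ℓ : ℤ) (Real.log y)]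
    push_cast
    ring_nf
  -- cosh u ≥ exp u / 2
  have hc : Real.exp ((ℓ : ℝ) * Real.log y) / 2 ≤ Real.cosh ((ℓ : ℝ) * Real.log y) := by
    rw [Real.cosh_eq]
    have := Real.exp_pos (-((ℓ : ℝ) * Real.log y))
    linarith
  -- exp (2s) ≤ y
  have hexp2s : Real.exp (2 * s) ≤ y := by
    have h := exp_two_mul_le_aux hs0
    have h1s : 0 < 1 - s := by linarith
    have : (1 - s) * y = 1 + s := by nlinarith
    have h7 : Real.exp (2 * s) * (1 - s) ≤ y * (1 - s) := by nlinarith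
    exact (mul_le_mul_iff_of_pos_right h1s).mp h7
  -- exp (2 ℓ s) ≤ y ^ ℓ = exp (ℓ log y)
  have hpow : Real.exp (2 * ℓ * s) ≤ Real.exp ((ℓ : ℝ) * Real.log y) := by
    have h1 : Real.exp (2 * ℓ * s) = (Real.exp (2 * s)) ^ ℓ := by
      rw [← Real.exp_nat_mul]; ring_nf
    have h2 : Real.exp ((ℓ : ℝ) * Real.log y) = y ^ ℓ := by
      rw [mul_comm, Real.exp_mul, Real.exp_log hy0, ← Real.rpow_natCast]
    rw [h1, h2]
    exact pow_le_pow_left₀ (Real.exp_pos _).le hexp2s ℓ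
  rw [hT]
  calc (1 / 2 : ℝ) * Real.exp (2 * ℓ * s)
      ≤ Real.exp ((ℓ : ℝ) * Real.log y) / 2 := by linarith
    _ ≤ _ := hc
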